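/- For n ≥ 5, the independence polynomial of the graph CE_n (the cycle C_n with the additional chord {n-2, n}) satisfies I(CE_n; t) = I(P_{n-1}; t) + t·I(P_{n-4}; t), and its coefficient of t^i equals binomial(n-i, i) + binomial(n-i-2, i-1) for 0 ≤ i ≤ ⌊n/2⌋. -/

import Mathlib

open Finset Polynomial

noncomputable def indepCount {V : Type*} [Fintype V] (G : SimpleGraph V) (k : ℕ) : ℕ :=
  Set.ncard {s : Finset V | s.card = k ∧ ∀ v ∈ s, ∀ w ∈ s, ¬ G.Adj v w}

def pathG (n : ℕ) : SimpleGraph (Fin n) :=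
  SimpleGraph.fromRel (fun a b => (a : ℕ) + 1 = (b : ℕ))

def ceG (n : ℕ) : SimpleGraph (Fin n) :=
  SimpleGraph.fromRel (fun a b => (a : ℕ) + 1 = (b : ℕ) ∨ ((a : ℕ) = n - 1 ∧ (b : ℕ) = 0)
    ∨ ((a : ℕ) = n - 3 ∧ (b : ℕ) = n - 1))

noncomputable def indepPoly {V : Type*} [Fintype V] (G : SimpleGraph V) : Polynomial ℤ :=
  ∑ k ∈ Finset.range (Fintype.card V + 1), Polynomial.C (indepCount G k : ℤ) * Polynomial.X ^ k


def A (m k : ℕ) : ℕ :=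
  (((range m).powerset).filter (fun s => s.card = k ∧ ∀ x ∈ s, x + 1 ∉ s)).card

lemma A_zero_right (m : ℕ) : A m 0 = 1 := by
  unfold A
  have : ((range m).powerset).filter (fun s => s.card = 0 ∧ ∀ x ∈ s, x + 1 ∉ s) = {∅} := by
    ext s
    simp only [mem_filter, mem_powerset, mem_singleton, Finset.card_eq_zero]
    constructor
    · rintro ⟨-, rfl, -⟩; rfl
    · rintro rfl; simp
  rw [this, card_singleton]

lemma A_of_lt {m k : ℕ} (h : m < k) : A m k = 0 := by
  unfold A
  rw [Finset.card_eq_zero, Finset.filter_eq_empty_iff]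
  rintro s hs ⟨hcard, -⟩
  have := Finset.card_le_card (Finset.mem_powerset.mp hs)
  rw [hcard, Finset.card_range] at this
  omega

lemma A_one_one : A 1 1 = 1 := by
  unfold A
  have : ((range 1).powerset).filter (fun s => s.card = 1 ∧ ∀ x ∈ s, x + 1 ∉ s) = {{0}} := by
    ext s
    simp only [mem_filter, mem_powerset, mem_singleton, Finset.card_eq_one, range_one]
    constructor
    · rintro ⟨hs, ⟨a, rfl⟩, -⟩
      have : a ∈ ({0} : Finset ℕ) := hs (by simp)
      simp at this
      subst this; rfl
    · rintro rfl
      refine ⟨Finset.Subset.refl _, ⟨0, rfl⟩, ?_⟩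
      intro x hx
      simp at hx
      subst hx
      simp
  rw [this, card_singleton]

lemma A_rec (m k : ℕ) : A (m + 2) (k + 1) = A (m + 1) (k + 1) + A m k := by
  classical
  unfold A
  set P : Finset ℕ → Prop := fun s => s.card = k + 1 ∧ ∀ x ∈ s, x + 1 ∉ s with hP
  rw [← Finset.card_filter_add_card_filter_not (s := ((range (m+2)).powerset).filter P)
    (fun s => m + 1 ∈ s)]
  rw [add_comm]
  congr 1
  · -- not containing m+1
    congr 1
    ext s
    simp only [mem_filter, mem_powerset, hP]
    constructor
    · rintro ⟨⟨hsub, hc, hnc⟩, hm⟩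
      refine ⟨?_, hc, hnc⟩
      intro x hx
      have := hsub hx
      simp only [mem_range] at this ⊢
      rcases Nat.lt_or_ge x (m+1) with h | h
      · exact h
      · exfalso; apply hm; have : x = m + 1 := by omega
        rwa [this] at hx
    · rintro ⟨hsub, hc, hnc⟩
      have hm : m + 1 ∉ s := fun h => by have := hsub h; simp only [mem_range] at this; omega
      exact ⟨⟨fun x hx => by have := hsub hx; simp at this ⊢; omega, hc, hnc⟩, hm⟩
  · -- containing m+1 : bijection with A m k
    apply Finset.card_nbij' (fun s => s.erase (m + 1)) (fun t => insert (m + 1) t)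
    · rintro s hs
      simp only [Finset.mem_coe, mem_filter, mem_powerset, hP] at hs ⊢
      obtain ⟨⟨hsub, hc, hnc⟩, hm⟩ := hs
      have hmem : m ∉ s := fun h => hnc m h hm
      refine ⟨?_, ?_, ?_⟩
      · intro x hx
        rw [Finset.mem_erase] at hx
        have h1 := hsub hx.2
        have h2 : x ≠ m := fun h => hmem (h ▸ hx.2)
        have h3 := hx.1
        simp only [mem_range] at h1 ⊢
        omega
      · rw [Finset.card_erase_of_mem hm, hc]; omega
      · intro x hx
        rw [Finset.mem_erase] at hx
        intro hx1
        rw [Finset.mem_erase] at hx1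
        exact hnc x hx.2 hx1.2
    · rintro t ht
      simp only [Finset.mem_coe, mem_filter, mem_powerset, hP] at ht ⊢
      obtain ⟨hsub, hc, hnc⟩ := ht
      have hnotin : m + 1 ∉ t := fun h => by have := hsub h; simp at this
      refine ⟨⟨?_, ?_, ?_⟩, by simp⟩
      · intro x hx
        rw [Finset.mem_insert] at hx
        rcases hx with rfl | hx
        · simp
        · have := hsub hx; simp at this ⊢; omega
      · rw [Finset.card_insert_of_notMem hnotin, hc]
      · intro x hx hx1
        rw [Finset.mem_insert] at hx hx1
        rcases hx with rfl | hx
        · rcases hx1 with h | h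
          · omega
          · have := hsub h; simp at this; omega
        · rcases hx1 with h | h
          · have := hsub hx; simp at this; omega
          · exact hnc x hx h
    · rintro s hs
      simp only [Finset.mem_coe, mem_filter] at hs
      exact Finset.insert_erase hs.2
    · rintro t ht
      simp only [Finset.mem_coe, mem_filter, mem_powerset] at ht
      apply Finset.erase_insert
      intro h
      have := ht.1 h
      simp only [mem_range] at this; omega
lemma A_formula : ∀ m k, A m k = (m + 1 - k).choose k := by
  intro m
  induction m using Nat.strong_induction_on with
  | _ m ih =>
    intro k
    match m, k with
    | m, 0 => simp [A_zero_right]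
    | 0, (k+1) => rw [A_of_lt (by omega)]; simp
    | 1, 1 => simpa using A_one_one
    | 1, (k+2) => rw [A_of_lt (by omega)]; simp
    | (m+2), (k+1) =>
      rw [A_rec, ih (m+1) (by omega), ih m (by omega)]
      rcases Nat.lt_or_ge (m + 1) k with h | h
      · rw [Nat.choose_eq_zero_of_lt (by omega), Nat.choose_eq_zero_of_lt (by omega),
          Nat.choose_eq_zero_of_lt (by omega)]
      · have h1 : m + 2 + 1 - (k + 1) = (m + 1 - k) + 1 := by omega
        have h2 : m + 1 + 1 - (k + 1) = m + 1 - k := by omega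
        rw [h1, h2, Nat.choose_succ_succ, Nat.add_comm]

lemma ncard_setOf_eq {α : Type*} [Fintype α] (p : Finset α → Prop) [DecidablePred p] :
    Set.ncard {s : Finset α | p s} = (Finset.univ.filter p).card := by
  rw [← Set.ncard_coe_finset]
  congr 1
  ext s
  simp

lemma map_attachFin (u : Finset ℕ) {n : ℕ} (h : ∀ m ∈ u, m < n) :
    (u.attachFin h).map Fin.valEmbedding = u := by
  ext a
  simp only [Finset.mem_map, Finset.mem_attachFin, Fin.valEmbedding_apply]
  constructor
  · rintro ⟨b, hb, rfl⟩; exact hb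
  · intro ha; exact ⟨⟨a, h a ha⟩, ha, rfl⟩

lemma card_filter_fin (n : ℕ) (Q : Finset ℕ → Prop) [DecidablePred Q] :
    (Finset.univ.filter (fun s : Finset (Fin n) => Q (s.map Fin.valEmbedding))).card
      = (((range n).powerset).filter Q).card := by
  apply Finset.card_nbij' (fun s => s.map Fin.valEmbedding)
      (fun t => (t.filter (· < n)).attachFin (fun m hm => (mem_filter.mp hm).2))
  · intro s hs
    simp only [Finset.mem_coe, mem_filter, mem_powerset, mem_univ, true_and] at hs ⊢
    refine ⟨?_, hs⟩
    intro x hx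
    simp only [Finset.mem_map, Fin.valEmbedding_apply] at hx
    obtain ⟨b, -, rfl⟩ := hx
    simp [b.isLt]
  · intro t ht
    simp only [Finset.mem_coe, mem_filter, mem_powerset] at ht
    have hft : t.filter (· < n) = t :=
      Finset.filter_true_of_mem (fun x hx => mem_range.mp (ht.1 hx))
    simp only [Finset.mem_coe, mem_filter, mem_univ, true_and]
    rw [map_attachFin, hft]
    exact ht.2
  · intro s _
    apply Finset.map_injective Fin.valEmbedding
    rw [map_attachFin]
    apply Finset.filter_true_of_mem
    intro x hx
    simp only [Finset.mem_map, Fin.valEmbedding_apply] at hx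
    obtain ⟨b, -, rfl⟩ := hx
    exact b.isLt
  · intro t ht
    simp only [Finset.mem_coe, mem_filter, mem_powerset] at ht
    have hft : t.filter (· < n) = t :=
      Finset.filter_true_of_mem (fun x hx => mem_range.mp (ht.1 hx))
    dsimp only
    rw [map_attachFin, hft]

lemma indepCount_path (m k : ℕ) : indepCount (pathG m) k = A m k := by
  classical
  unfold indepCount A
  rw [ncard_setOf_eq]
  rw [← card_filter_fin m (fun s => s.card = k ∧ ∀ x ∈ s, x + 1 ∉ s)]
  congr 1
  apply Finset.filter_congr
  intro s _
  rw [Finset.card_map]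
  refine and_congr_right (fun _ => ?_)
  constructor
  · intro h x hx hx1
    simp only [Finset.mem_map, Fin.valEmbedding_apply] at hx hx1
    obtain ⟨v, hv, rfl⟩ := hx
    obtain ⟨w, hw, hw1⟩ := hx1
    apply h v hv w hw
    rw [pathG, SimpleGraph.fromRel_adj]
    exact ⟨fun he => by subst he; omega, Or.inl hw1.symm⟩
  · intro h v hv w hw hadj
    rw [pathG, SimpleGraph.fromRel_adj] at hadj
    obtain ⟨-, hr | hr⟩ := hadj
    · exact h v.val (Finset.mem_map.mpr ⟨v, hv, rfl⟩)
        (by rw [hr]; exact Finset.mem_map.mpr ⟨w, hw, rfl⟩)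
    · exact h w.val (Finset.mem_map.mpr ⟨w, hw, rfl⟩)
        (by rw [hr]; exact Finset.mem_map.mpr ⟨v, hv, rfl⟩)

def Bc (n k : ℕ) : ℕ :=
  (((range n).powerset).filter (fun s => s.card = k ∧ (∀ x ∈ s, x + 1 ∉ s)
    ∧ ¬(0 ∈ s ∧ n - 1 ∈ s) ∧ ¬(n - 3 ∈ s ∧ n - 1 ∈ s))).card

lemma indepCount_ce (n k : ℕ) (hn : 5 ≤ n) : indepCount (ceG n) k = Bc n k := by
  classical
  unfold indepCount Bc
  rw [ncard_setOf_eq]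
  rw [← card_filter_fin n (fun s => s.card = k ∧ (∀ x ∈ s, x + 1 ∉ s)
    ∧ ¬(0 ∈ s ∧ n - 1 ∈ s) ∧ ¬(n - 3 ∈ s ∧ n - 1 ∈ s))]
  congr 1
  apply Finset.filter_congr
  intro s _
  rw [Finset.card_map]
  refine and_congr_right (fun _ => ?_)
  have memmap : ∀ x : ℕ, x ∈ s.map Fin.valEmbedding ↔ ∃ v ∈ s, (v : ℕ) = x := by
    intro x; simp only [Finset.mem_map, Fin.valEmbedding_apply]
  constructor
  · intro h
    refine ⟨?_, ?_, ?_⟩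
    · intro x hx hx1
      obtain ⟨v, hv, rfl⟩ := (memmap x).mp hx
      obtain ⟨w, hw, hw1⟩ := (memmap _).mp hx1
      apply h v hv w hw
      rw [ceG, SimpleGraph.fromRel_adj]
      exact ⟨fun he => by subst he; omega, Or.inl (Or.inl hw1.symm)⟩
    · rintro ⟨h0, h1⟩
      obtain ⟨v, hv, hv0⟩ := (memmap 0).mp h0
      obtain ⟨w, hw, hw1⟩ := (memmap _).mp h1
      apply h w hw v hv
      rw [ceG, SimpleGraph.fromRel_adj]
      refine ⟨fun he => by rw [he] at hw1; omega, Or.inl (Or.inr (Or.inl ⟨hw1, hv0⟩))⟩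
    · rintro ⟨h0, h1⟩
      obtain ⟨v, hv, hv0⟩ := (memmap _).mp h0
      obtain ⟨w, hw, hw1⟩ := (memmap _).mp h1
      apply h v hv w hw
      rw [ceG, SimpleGraph.fromRel_adj]
      refine ⟨fun he => by rw [he] at hv0; omega, Or.inl (Or.inr (Or.inr ⟨hv0, hw1⟩))⟩
  · rintro ⟨hnc, hp1, hp2⟩ v hv w hw hadj
    rw [ceG, SimpleGraph.fromRel_adj] at hadj
    have hvm : (v : ℕ) ∈ s.map Fin.valEmbedding := (memmap _).mpr ⟨v, hv, rfl⟩
    have hwm : (w : ℕ) ∈ s.map Fin.valEmbedding := (memmap _).mpr ⟨w, hw, rfl⟩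
    obtain ⟨-, hr | hr⟩ := hadj
    · rcases hr with h | h | h
      · exact hnc v.val hvm (h ▸ hwm)
      · exact hp1 ⟨h.2 ▸ hwm, h.1 ▸ hvm⟩
      · exact hp2 ⟨h.1 ▸ hvm, h.2 ▸ hwm⟩
    · rcases hr with h | h | h
      · exact hnc w.val hwm (h ▸ hvm)
      · exact hp1 ⟨h.2 ▸ hvm, h.1 ▸ hwm⟩
      · exact hp2 ⟨h.1 ▸ hwm, h.2 ▸ hvm⟩

lemma Bc_zero (n : ℕ) : Bc n 0 = 1 := by
  unfold Bc
  have : ((range n).powerset).filter (fun s => s.card = 0 ∧ (∀ x ∈ s, x + 1 ∉ s)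
      ∧ ¬(0 ∈ s ∧ n - 1 ∈ s) ∧ ¬(n - 3 ∈ s ∧ n - 1 ∈ s)) = {∅} := by
    ext s
    simp only [mem_filter, mem_powerset, mem_singleton, Finset.card_eq_zero]
    constructor
    · rintro ⟨-, rfl, -⟩; rfl
    · rintro rfl; simp
  rw [this, card_singleton]

lemma Bc_succ (n k : ℕ) (hn : 5 ≤ n) : Bc n (k + 1) = A (n - 1) (k + 1) + A (n - 4) k := by
  classical
  unfold Bc A
  set P : Finset ℕ → Prop := fun s => s.card = k + 1 ∧ (∀ x ∈ s, x + 1 ∉ s)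
    ∧ ¬(0 ∈ s ∧ n - 1 ∈ s) ∧ ¬(n - 3 ∈ s ∧ n - 1 ∈ s) with hP
  rw [← Finset.card_filter_add_card_filter_not (s := ((range n).powerset).filter P)
    (fun s => n - 1 ∈ s)]
  rw [add_comm]
  congr 1
  · -- sets not containing n-1 ↔ A (n-1) (k+1)
    congr 1
    ext s
    simp only [mem_filter, mem_powerset, hP]
    constructor
    · rintro ⟨⟨hsub, hc, hnc, -, -⟩, hm⟩
      refine ⟨?_, hc, hnc⟩
      intro x hx
      have h1 := hsub hx
      have h2 : x ≠ n - 1 := fun h => hm (h ▸ hx)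
      simp only [mem_range] at h1 ⊢
      omega
    · rintro ⟨hsub, hc, hnc⟩
      have hm : n - 1 ∉ s := fun h => by
        have := hsub h; simp only [mem_range] at this; omega
      exact ⟨⟨fun x hx => by have := hsub hx; simp only [mem_range] at this ⊢; omega,
        hc, hnc, fun h => hm h.2, fun h => hm h.2⟩, hm⟩
  · -- sets containing n-1 : bijection with A (n-4) k
    apply Finset.card_nbij' (fun s => (s.erase (n - 1)).image (· - 1))
      (fun t => insert (n - 1) (t.image (· + 1)))
    · rintro s hs
      simp only [Finset.mem_coe, mem_filter, mem_powerset, hP] at hs ⊢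
      obtain ⟨⟨hsub, hc, hnc, hp1, hp2⟩, hm⟩ := hs
      have hbound : ∀ x ∈ s.erase (n - 1), 1 ≤ x ∧ x ≤ n - 4 := by
        intro x hx
        rw [Finset.mem_erase] at hx
        obtain ⟨hne, hxs⟩ := hx
        have h1 := hsub hxs
        simp only [mem_range] at h1
        have h0 : x ≠ 0 := fun h => hp1 ⟨h ▸ hxs, hm⟩
        have h3 : x ≠ n - 3 := fun h => hp2 ⟨h ▸ hxs, hm⟩
        have h2 : x ≠ n - 2 := fun h => hnc x hxs (by rw [h, show n - 2 + 1 = n - 1 by omega]; exact hm)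
        omega
      have hinj : Set.InjOn (· - 1) ↑(s.erase (n - 1)) := by
        intro a ha b hb hab
        have := hbound a ha
        have := hbound b hb
        simp only [Finset.coe_mem] at *
        omega
      refine ⟨?_, ?_, ?_⟩
      · intro x hx
        simp only [Finset.mem_image] at hx
        obtain ⟨a, ha, rfl⟩ := hx
        have := hbound a ha
        simp only [mem_range]
        omega
      · rw [Finset.card_image_of_injOn hinj, Finset.card_erase_of_mem hm, hc]; omega
      · intro y hy hy1
        simp only [Finset.mem_image] at hy hy1
        obtain ⟨a, ha, hay⟩ := hy
        obtain ⟨b, hb, hby⟩ := hy1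
        have hba := hbound a ha
        have hbb := hbound b hb
        rw [Finset.mem_erase] at ha hb
        have hab : b = a + 1 := by omega
        exact hnc a ha.2 (hab ▸ hb.2)
    · rintro t ht
      simp only [Finset.mem_coe, mem_filter, mem_powerset, hP] at ht ⊢
      obtain ⟨hsub, hc, hnc⟩ := ht
      have htb : ∀ x ∈ t, x < n - 4 := fun x hx => mem_range.mp (hsub hx)
      have hnotin : n - 1 ∉ t.image (· + 1) := by
        simp only [Finset.mem_image]
        rintro ⟨y, hy, hye⟩
        have := htb y hy
        omega
      have hmem : n - 1 ∈ insert (n - 1) (t.image (· + 1)) := Finset.mem_insert_self _ _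
      refine ⟨⟨?_, ?_, ?_, ?_, ?_⟩, hmem⟩
      · intro x hx
        rw [Finset.mem_insert] at hx
        simp only [mem_range]
        rcases hx with rfl | hx
        · omega
        · simp only [Finset.mem_image] at hx
          obtain ⟨y, hy, rfl⟩ := hx
          have := htb y hy
          omega
      · rw [Finset.card_insert_of_notMem hnotin,
          Finset.card_image_of_injective _ (fun a b h => by omega), hc]
      · intro x hx hx1
        rw [Finset.mem_insert] at hx hx1
        simp only [Finset.mem_image] at hx hx1
        rcases hx with rfl | ⟨y, hy, rfl⟩
        · rcases hx1 with h | ⟨z, hz, hze⟩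
          · omega
          · have := htb z hz; omega
        · have hyb := htb y hy
          rcases hx1 with h | ⟨z, hz, hze⟩
          · omega
          · have : z = y + 1 := by omega
            exact hnc y hy (this ▸ hz)
      · rintro ⟨h0, -⟩
        rw [Finset.mem_insert] at h0
        simp only [Finset.mem_image] at h0
        rcases h0 with h | ⟨y, hy, hye⟩
        · omega
        · omega
      · rintro ⟨h3, -⟩
        rw [Finset.mem_insert] at h3
        simp only [Finset.mem_image] at h3
        rcases h3 with h | ⟨y, hy, hye⟩
        · omega
        · have := htb y hy; omega
    · rintro s hs
      simp only [Finset.mem_coe, mem_filter, mem_powerset, hP] at hs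
      obtain ⟨⟨hsub, hc, hnc, hp1, hp2⟩, hm⟩ := hs
      have hbound : ∀ x ∈ s.erase (n - 1), 1 ≤ x := by
        intro x hx
        rw [Finset.mem_erase] at hx
        have h0 : x ≠ 0 := fun h => hp1 ⟨h ▸ hx.2, hm⟩
        omega
      dsimp only
      rw [Finset.image_image]
      rw [Finset.image_congr (g := id) (fun x hx => by
        simp only [Function.comp_apply, id_eq]
        have := hbound x hx
        omega)]
      rw [Finset.image_id, Finset.insert_erase hm]
    · rintro t ht
      simp only [Finset.mem_coe, mem_filter, mem_powerset] at ht
      have htb : ∀ x ∈ t, x < n - 4 := fun x hx => mem_range.mp (ht.1 hx)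
      have hnotin : n - 1 ∉ t.image (· + 1) := by
        simp only [Finset.mem_image]
        rintro ⟨y, hy, hye⟩
        have := htb y hy
        omega
      dsimp only
      rw [Finset.erase_insert hnotin, Finset.image_image]
      rw [Finset.image_congr (g := id) (fun x _ => by
        simp only [Function.comp_apply, id_eq]; omega)]
      rw [Finset.image_id]

lemma indepCount_big {V : Type*} [Fintype V] (G : SimpleGraph V) {k : ℕ}
    (h : Fintype.card V < k) : indepCount G k = 0 := by
  unfold indepCount
  convert Set.ncard_empty (Finset V) using 2
  ext s
  simp only [Set.mem_setOf_eq, Set.mem_empty_iff_false, iff_false]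
  rintro ⟨hc, -⟩
  have := Finset.card_le_univ s
  omega

lemma coeff_indepPoly {V : Type*} [Fintype V] (G : SimpleGraph V) (i : ℕ) :
    (indepPoly G).coeff i = (indepCount G i : ℤ) := by
  unfold indepPoly
  rw [Polynomial.finset_sum_coeff]
  simp only [Polynomial.coeff_C_mul_X_pow]
  rw [Finset.sum_ite_eq (Finset.range (Fintype.card V + 1)) i
    (fun k => (indepCount G k : ℤ))]
  split_ifs with h
  · rfl
  · rw [Finset.mem_range] at h
    rw [indepCount_big G (by omega)]
    simp

theorem stmt11 (n : ℕ) (hn : 5 ≤ n) :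
    indepPoly (ceG n) = indepPoly (pathG (n - 1)) + Polynomial.X * indepPoly (pathG (n - 4)) ∧
    ∀ i ≤ n / 2, indepCount (ceG n) i =
      (n - i).choose i + (if 1 ≤ i then (n - i - 2).choose (i - 1) else 0) := by
  constructor
  · ext i
    rw [Polynomial.coeff_add, coeff_indepPoly, coeff_indepPoly]
    cases i with
    | zero =>
      rw [Polynomial.mul_coeff_zero, Polynomial.coeff_X_zero, zero_mul, add_zero]
      rw [indepCount_ce n 0 hn, Bc_zero n, indepCount_path, A_zero_right]
    | succ j =>
      rw [Polynomial.coeff_X_mul, coeff_indepPoly]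
      rw [indepCount_ce n (j + 1) hn, Bc_succ n j hn, indepCount_path, indepCount_path]
      push_cast
      ring
  · intro i _
    cases i with
    | zero =>
      rw [indepCount_ce n 0 hn, Bc_zero n]
      simp
    | succ j =>
      rw [indepCount_ce n (j + 1) hn, Bc_succ n j hn, A_formula, A_formula,
        if_pos (by omega : 1 ≤ j + 1)]
      have e1 : n - 1 + 1 - (j + 1) = n - (j + 1) := by omega
      have e2 : n - 4 + 1 - j = n - (j + 1) - 2 := by omega
      have e3 : j + 1 - 1 = j := by omega
      rw [e1, e2, e3]
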